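/- Let 0 ≤ ℓ ≤ n. Then (𝒱^S)_{(n−ℓ,ℓ)} is a free module over ℂ[z₁, …, z_n]^{S_n} of rank equal to the binomial coefficient C(n,ℓ); consequently 𝒱^S is a free ℂ[z₁, …, z_n]^{S_n}-module of rank 2^n. -/

import Mathlib

set_option synthInstance.maxHeartbeats 1000000
set_option maxHeartbeats 1000000

noncomputable section

open MvPolynomial

/-- The ring `ℂ[z₁, …, z_n]`. -/
abbrev MvP (n : ℕ) := MvPolynomial (Fin n) ℂ

/-- `𝒱 = V ⊗ ℂ[z₁, …, z_n]` where `V = (ℂ^{1|1})^{⊗n}`, realized as the space of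
`ℂ[z₁, …, z_n]`-valued functions on the index set `{1,2}^n` of the basis `v_I`
(we encode `1 ↦ 0` (even), `2 ↦ 1` (odd)). -/
abbrev Vsp (n : ℕ) := (Fin n → Fin 2) → MvP n

/-- Number of entries of `I` equal to `2` (i.e. to `1` in our `Fin 2` encoding). -/
def cnt {n : ℕ} (J : Fin n → Fin 2) : ℕ := (Finset.univ.filter fun s => J s = 1).card

/-- Membership in the weight subspace `(𝒱)_{(n−ℓ,ℓ)}`. -/
def memWt (n ℓ : ℕ) (f : Vsp n) : Prop := ∀ J, cnt J ≠ ℓ → f J = 0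

/-- The Koszul sign of the graded flip `P^{(i,j)}` at the index `J`. -/
def epsV {n : ℕ} (i j : Fin n) (J : Fin n → Fin 2) : MvP n :=
  if J i = 1 ∧ J j = 1 then -1 else 1

/-- Invariance of `f ∈ 𝒱` under the standard `S_n`-action: for every simple transposition
`s_i` (of positions `i` and `j = i+1`), `f = P^{(i,i+1)} f^{s_i}`, written out in theatomic
coordinates. -/
def stdInv (n : ℕ) (f : Vsp n) : Prop :=
  ∀ i j : Fin n, (j : ℕ) = (i : ℕ) + 1 → ∀ J,
    f J = epsV i j J * (rename (Equiv.swap i j) (f (J ∘ Equiv.swap i j)))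

/-- Invariance of `f ∈ 𝒱` under the modified `S_n`-action: for every simple transposition,
`(z_i − z_{i+1})·(f − P^{(i,i+1)} f^{s_i}) = f − f^{s_i}`, which is the (denominator-cleared)
fixed-point equation `f = ŝ_i f` for
`ŝ_i f = P^{(i,i+1)} f^{s_i} + (f − f^{s_i})/(z_i − z_{i+1})`. -/
def modInv (n : ℕ) (f : Vsp n) : Prop :=
  ∀ i j : Fin n, (j : ℕ) = (i : ℕ) + 1 → ∀ J,
    (X i - X j) * (f J - epsV i j J * (rename (Equiv.swap i j) (f (J ∘ Equiv.swap i j))))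
      = f J - rename (Equiv.swap i j) (f J)

/-- The operator `e_{ij}[r]` on `𝒱`: in the basis coordinates,
`(e f) J = Σ_s [J s = i] · sign · z_s^r · f (update J s j)`, where `sign = (−1)^{#{t<s : J t = 2}}`
for `i ≠ j` and `1` otherwise.  Here the first index is the target state and the second the
source state, so `e₂₁[r] = ee n 1 0 r` and `e₁₂[r] = ee n 0 1 r`. -/
def ee (n : ℕ) (i j : Fin 2) (r : ℕ) : Vsp n →ₗ[ℂ] Vsp n where
  toFun f := fun J => ∑ s : Fin n,
    if J s = i then
      (if i = j then 1
        else (-1 : MvP n) ^ (Finset.univ.filter fun t : Fin n => t < s ∧ J t = 1).card)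
        * (X s) ^ r * f (Function.update J s j)
    else 0
  map_add' f g := by
    funext J
    simp only [Pi.add_apply]
    rw [← Finset.sum_add_distrib]
    refine Finset.sum_congr rfl fun s _ => ?_
    by_cases h : J s = i <;> simp [h, mul_add]
  map_smul' c f := by
    funext J
    simp only [RingHom.id_apply, Pi.smul_apply]
    rw [Finset.smul_sum]
    refine Finset.sum_congr rfl fun s _ => ?_
    by_cases h : J s = i <;> simp [h, mul_smul_comm]

/-- The vector `v⁺ = v₁ ⊗ ⋯ ⊗ v₁ ⊗ 1`. -/
def vplus (n : ℕ) : Vsp n := fun J => if J = fun _ => 0 then 1 else 0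

namespace Stmt5Aux

open Equiv Matrix

variable {R : Type*} [CommRing R]

abbrev SS (n ℓ : ℕ) := {S : Finset (Fin n) // S.card = ℓ}

variable {n ℓ : ℕ}

def emb (S : SS n ℓ) : Fin ℓ → Fin n := fun p => S.1.orderEmbOfFin S.2 p

lemma cemb_card (S : SS n ℓ) : S.1ᶜ.card = n - ℓ := by
  rw [Finset.card_compl, S.2, Fintype.card_fin]

def cemb (S : SS n ℓ) : Fin (n - ℓ) → Fin n := fun q => S.1ᶜ.orderEmbOfFin (cemb_card S) q

lemma emb_mem (S : SS n ℓ) (p : Fin ℓ) : emb S p ∈ S.1 :=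
  Finset.orderEmbOfFin_mem _ S.2 p

lemma cemb_mem (S : SS n ℓ) (q : Fin (n - ℓ)) : cemb S q ∈ S.1ᶜ :=
  Finset.orderEmbOfFin_mem _ (cemb_card S) q

lemma emb_inj (S : SS n ℓ) : Function.Injective (emb S) :=
  (S.1.orderEmbOfFin S.2).injective

lemma cemb_inj (S : SS n ℓ) : Function.Injective (cemb S) :=
  (S.1ᶜ.orderEmbOfFin (cemb_card S)).injective

lemma emb_range (S : SS n ℓ) : Set.range (emb S) = (S.1 : Set (Fin n)) :=
  Finset.range_orderEmbOfFin _ S.2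

lemma cemb_range (S : SS n ℓ) : Set.range (cemb S) = ((S.1ᶜ : Finset (Fin n)) : Set (Fin n)) :=
  Finset.range_orderEmbOfFin _ (cemb_card S)

def e0 (hℓ : ℓ ≤ n) : Fin ℓ ⊕ Fin (n - ℓ) ≃ Fin n :=
  finSumFinEquiv.trans (finCongr (Nat.add_sub_cancel' hℓ))

lemma elim_bij (S : SS n ℓ) : Function.Bijective (Sum.elim (emb S) (cemb S)) := by
  rw [Fintype.bijective_iff_injective_and_card]
  constructor
  · rintro (p | q) (p' | q') h
    · simp only [Sum.elim_inl] at h; rw [emb_inj S h]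
    · simp only [Sum.elim_inl, Sum.elim_inr] at h
      exact absurd (h ▸ emb_mem S p) (Finset.mem_compl.mp (cemb_mem S q'))
    · simp only [Sum.elim_inl, Sum.elim_inr] at h
      exact absurd (h.symm ▸ emb_mem S p') (Finset.mem_compl.mp (cemb_mem S q))
    · simp only [Sum.elim_inr] at h; rw [cemb_inj S h]
  · simp [Nat.add_sub_cancel' (by simpa [← S.2] using S.1.card_le_univ : ℓ ≤ n)]

def eT (S : SS n ℓ) : Fin ℓ ⊕ Fin (n - ℓ) ≃ Fin n := Equiv.ofBijective _ (elim_bij S)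

@[simp] lemma eT_inl (S : SS n ℓ) (p : Fin ℓ) : eT S (Sum.inl p) = emb S p := rfl
@[simp] lemma eT_inr (S : SS n ℓ) (q : Fin (n - ℓ)) : eT S (Sum.inr q) = cemb S q := rfl

def prm (hℓ : ℓ ≤ n) (S : SS n ℓ) : Equiv.Perm (Fin n) := (e0 hℓ).symm.trans (eT S)

lemma prm_inl (hℓ : ℓ ≤ n) (S : SS n ℓ) (p : Fin ℓ) :
    prm hℓ S (e0 hℓ (Sum.inl p)) = emb S p := by simp [prm]

lemma prm_inr (hℓ : ℓ ≤ n) (S : SS n ℓ) (q : Fin (n - ℓ)) :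
    prm hℓ S (e0 hℓ (Sum.inr q)) = cemb S q := by simp [prm]

def sg (hℓ : ℓ ≤ n) (S : SS n ℓ) : ℤˣ := Equiv.Perm.sign (prm hℓ S)


variable {R : Type*} [CommRing R] {n ℓ : ℕ}

def psifun (hℓ : ℓ ≤ n) (T : SS n ℓ) (x : SS n ℓ × Perm (Fin ℓ) × Perm (Fin (n - ℓ))) :
    Perm (Fin n) :=
  prm hℓ x.1 * (e0 hℓ).permCongr (Equiv.sumCongr x.2.1 x.2.2) * (prm hℓ T)⁻¹

lemma psifun_emb (hℓ : ℓ ≤ n) (T S : SS n ℓ) (τ₁ : Perm (Fin ℓ)) (τ₂ : Perm (Fin (n - ℓ)))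
    (p : Fin ℓ) : psifun hℓ T (S, τ₁, τ₂) (emb T p) = emb S (τ₁ p) := by
  have h1 : (prm hℓ T)⁻¹ (emb T p) = e0 hℓ (Sum.inl p) := by
    rw [← prm_inl hℓ T p, Equiv.Perm.inv_def, Equiv.symm_apply_apply]
  simp only [psifun, Equiv.Perm.coe_mul, Function.comp_apply, h1, Equiv.permCongr_apply,
    Equiv.symm_apply_apply, Equiv.sumCongr_apply, Sum.map_inl]
  exact prm_inl hℓ S (τ₁ p)

lemma psifun_cemb (hℓ : ℓ ≤ n) (T S : SS n ℓ) (τ₁ : Perm (Fin ℓ)) (τ₂ : Perm (Fin (n - ℓ)))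
    (q : Fin (n - ℓ)) : psifun hℓ T (S, τ₁, τ₂) (cemb T q) = cemb S (τ₂ q) := by
  have h1 : (prm hℓ T)⁻¹ (cemb T q) = e0 hℓ (Sum.inr q) := by
    rw [← prm_inr hℓ T q, Equiv.Perm.inv_def, Equiv.symm_apply_apply]
  simp only [psifun, Equiv.Perm.coe_mul, Function.comp_apply, h1, Equiv.permCongr_apply,
    Equiv.symm_apply_apply, Equiv.sumCongr_apply, Sum.map_inr]
  exact prm_inr hℓ S (τ₂ q)

lemma sub_of_psifun_eq (hℓ : ℓ ≤ n) (T : SS n ℓ) {S S' : SS n ℓ} {τ₁ τ₁'} {τ₂ τ₂'}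
    (h : psifun hℓ T (S, τ₁, τ₂) = psifun hℓ T (S', τ₁', τ₂')) : S.1 ⊆ S'.1 := by
  intro a ha
  have : a ∈ Set.range (emb S) := by rw [emb_range]; exact ha
  obtain ⟨p, rfl⟩ := this
  have h2 := congrArg (fun σ : Perm (Fin n) => σ (emb T (τ₁⁻¹ p))) h
  simp only [psifun_emb, Equiv.Perm.inv_def, Equiv.apply_symm_apply] at h2
  rw [h2]
  exact emb_mem S' _

lemma psifun_inj (hℓ : ℓ ≤ n) (T : SS n ℓ) : Function.Injective (psifun hℓ T) := by
  rintro ⟨S, τ₁, τ₂⟩ ⟨S', τ₁', τ₂'⟩ h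
  have hS : S = S' :=
    Subtype.ext (Finset.Subset.antisymm (sub_of_psifun_eq hℓ T h) (sub_of_psifun_eq hℓ T h.symm))
  subst hS
  have h1 : τ₁ = τ₁' := by
    ext p
    have := congrArg (fun σ : Perm (Fin n) => σ (emb T p)) h
    simp only [psifun_emb] at this
    exact congrArg Fin.val (emb_inj S this)
  have h2 : τ₂ = τ₂' := by
    ext q
    have := congrArg (fun σ : Perm (Fin n) => σ (cemb T q)) h
    simp only [psifun_cemb] at this
    exact congrArg Fin.val (cemb_inj S this)
  rw [h1, h2]

lemma hln (hℓ : ℓ ≤ n) : ℓ + (n - ℓ) = n := Nat.add_sub_cancel' hℓ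

lemma psifun_bij (hℓ : ℓ ≤ n) (T : SS n ℓ) : Function.Bijective (psifun hℓ T) := by
  rw [Fintype.bijective_iff_injective_and_card]
  refine ⟨psifun_inj hℓ T, ?_⟩
  simp only [Fintype.card_prod, Fintype.card_perm, Fintype.card_finset_len, Fintype.card_fin,
    Fintype.card_equiv (Equiv.refl _)]
  rw [← mul_assoc]
  exact Nat.choose_mul_factorial_mul_factorial hℓ

def psi (hℓ : ℓ ≤ n) (T : SS n ℓ) :
    (SS n ℓ × Perm (Fin ℓ) × Perm (Fin (n - ℓ))) ≃ Perm (Fin n) :=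
  Equiv.ofBijective _ (psifun_bij hℓ T)

lemma sign_psifun (hℓ : ℓ ≤ n) (T S : SS n ℓ) (τ₁ : Perm (Fin ℓ)) (τ₂ : Perm (Fin (n - ℓ))) :
    Equiv.Perm.sign (psifun hℓ T (S, τ₁, τ₂))
      = sg hℓ S * (Equiv.Perm.sign τ₁ * Equiv.Perm.sign τ₂) * sg hℓ T := by
  simp only [psifun, Equiv.Perm.sign_mul, Equiv.Perm.sign_inv, Equiv.Perm.sign_permCongr,
    Equiv.Perm.sign_sumCongr, sg]

lemma prod_split (T : SS n ℓ) (g : Fin n → R) :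
    ∏ i, g i = (∏ p, g (emb T p)) * ∏ q, g (cemb T q) := by
  rw [← Equiv.prod_comp (eT T) g, Fintype.prod_sum_type]
  rfl

theorem laplace (hℓ : ℓ ≤ n) (M : Matrix (Fin n) (Fin n) R) (T : SS n ℓ) :
    ∑ S : SS n ℓ, ((sg hℓ S : ℤ) : R) *
        (det (M.submatrix (emb S) (emb T)) * det (M.submatrix (cemb S) (cemb T)))
      = ((sg hℓ T : ℤ) : R) * det M := by
  have key : det M = ∑ S : SS n ℓ, ((sg hℓ S : ℤ) : R) * ((sg hℓ T : ℤ) : R) *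
      (det (M.submatrix (emb S) (emb T)) * det (M.submatrix (cemb S) (cemb T))) := by
    rw [det_apply' M]
    rw [← Equiv.sum_comp (psi hℓ T) (fun σ => ((Equiv.Perm.sign σ : ℤ) : R) * ∏ i, M (σ i) i)]
    rw [Fintype.sum_prod_type]
    refine Finset.sum_congr rfl fun S _ => ?_
    have hsub1 : det (M.submatrix (emb S) (emb T))
        = ∑ τ₁ : Perm (Fin ℓ), ((Equiv.Perm.sign τ₁ : ℤ) : R) * ∏ p, M (emb S (τ₁ p)) (emb T p) :=
      det_apply' _
    have hsub2 : det (M.submatrix (cemb S) (cemb T))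
        = ∑ τ₂ : Perm (Fin (n - ℓ)),
            ((Equiv.Perm.sign τ₂ : ℤ) : R) * ∏ q, M (cemb S (τ₂ q)) (cemb T q) :=
      det_apply' _
    rw [Fintype.sum_prod_type]
    rw [hsub1, hsub2, Finset.sum_mul_sum, Finset.mul_sum]
    refine Finset.sum_congr rfl fun τ₁ _ => ?_
    rw [Finset.mul_sum]
    refine Finset.sum_congr rfl fun τ₂ _ => ?_
    have hψ : psi hℓ T (S, τ₁, τ₂) = psifun hℓ T (S, τ₁, τ₂) := rfl
    rw [hψ, sign_psifun hℓ T S τ₁ τ₂]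
    rw [prod_split T (fun i => M (psifun hℓ T (S, τ₁, τ₂) i) i)]
    simp only [psifun_emb, psifun_cemb]
    push_cast
    ring
  have hT2 : ((sg hℓ T : ℤ) : R) * ((sg hℓ T : ℤ) : R) = 1 := by
    rw [← Int.cast_mul, ← Units.val_mul, Int.units_mul_self, Units.val_one, Int.cast_one]
  rw [key, Finset.mul_sum]
  refine Finset.sum_congr rfl fun S _ => ?_
  have haux : ∀ D : R, ((sg hℓ S : ℤ) : R) * D
      = ((sg hℓ T : ℤ) : R) * (((sg hℓ S : ℤ) : R) * ((sg hℓ T : ℤ) : R) * D) := fun D => by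
    calc ((sg hℓ S : ℤ) : R) * D
        = (((sg hℓ T : ℤ) : R) * ((sg hℓ T : ℤ) : R)) * (((sg hℓ S : ℤ) : R) * D) := by
          rw [hT2, one_mul]
      _ = ((sg hℓ T : ℤ) : R) * (((sg hℓ S : ℤ) : R) * ((sg hℓ T : ℤ) : R) * D) := by ring
  exact haux _


/-! ### Vandermonde minors -/

def Amat (n : ℕ) : Matrix (Fin n) (Fin n) (MvP n) :=
  Matrix.of fun k s => (X s : MvP n) ^ (k : ℕ)

def Del (n : ℕ) : MvP n := det (Amat n)

lemma del_eq (n : ℕ) : Del n = ∏ i : Fin n, ∏ j ∈ Finset.Ioi i, (X j - X i) := by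
  rw [Del, ← Matrix.det_transpose]
  have : (Amat n)ᵀ = Matrix.vandermonde (fun s : Fin n => (X s : MvP n)) := by
    ext i j; rfl
  rw [this, Matrix.det_vandermonde]

lemma X_sub_X_ne {n : ℕ} {i j : Fin n} (h : i ≠ j) : (X j - X i : MvP n) ≠ 0 :=
  sub_ne_zero.mpr fun e => h (MvPolynomial.X_injective e).symm

lemma del_ne_zero (n : ℕ) : Del n ≠ 0 := by
  rw [del_eq]
  refine Finset.prod_ne_zero_iff.mpr fun i _ => Finset.prod_ne_zero_iff.mpr fun j hj => ?_
  exact X_sub_X_ne (by exact fun e => absurd (e ▸ hj) (by simp))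

def gfun {n ℓ : ℕ} (T T' : SS n ℓ) : Fin n → Fin n := fun j =>
  if h : j ∈ T.1ᶜ then cemb T' ((T.1ᶜ.orderIsoOfFin (cemb_card T)).symm ⟨j, h⟩) else j

lemma gfun_emb {n ℓ : ℕ} (T T' : SS n ℓ) (p : Fin ℓ) : gfun T T' (emb T p) = emb T p := by
  rw [gfun, dif_neg]
  simp only [Finset.mem_compl, not_not]
  exact emb_mem T p

lemma orderIso_cemb {n ℓ : ℕ} (T : SS n ℓ) (q : Fin (n - ℓ)) :
    (T.1ᶜ.orderIsoOfFin (cemb_card T)) q = ⟨cemb T q, cemb_mem T q⟩ :=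
  Subtype.ext (Finset.coe_orderIsoOfFin_apply _ _ _)

lemma gfun_cemb {n ℓ : ℕ} (T T' : SS n ℓ) (q : Fin (n - ℓ)) :
    gfun T T' (cemb T q) = cemb T' q := by
  rw [gfun, dif_pos (cemb_mem T q)]
  congr 1
  rw [show (⟨cemb T q, cemb_mem T q⟩ : {x // x ∈ T.1ᶜ}) = (T.1ᶜ.orderIsoOfFin (cemb_card T)) q from
    (orderIso_cemb T q).symm, OrderIso.symm_apply_apply]

lemma gfun_self {n ℓ : ℕ} (T : SS n ℓ) : gfun T T = id := by
  funext j
  rw [gfun]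
  split_ifs with h
  · have : (⟨j, h⟩ : {x // x ∈ T.1ᶜ}) = (T.1ᶜ.orderIsoOfFin (cemb_card T))
        ((T.1ᶜ.orderIsoOfFin (cemb_card T)).symm ⟨j, h⟩) := (OrderIso.apply_symm_apply _ _).symm
    have h2 := congrArg Subtype.val this
    rw [orderIso_cemb] at this
    exact (congrArg Subtype.val this).symm
  · rfl

lemma exists_pair_of_ne {n ℓ : ℕ} (T T' : SS n ℓ) (h : T ≠ T') :
    ∃ j₁ j₂ : Fin n, j₁ ≠ j₂ ∧ gfun T T' j₁ = gfun T T' j₂ := by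
  have hne : ¬ T.1 ⊆ T'.1 := by
    intro hsub
    exact h (Subtype.ext (Finset.eq_of_subset_of_card_le hsub (by rw [T.2, T'.2])))
  obtain ⟨a, haT, haT'⟩ := Finset.not_subset.mp hne
  have haC : a ∈ T'.1ᶜ := Finset.mem_compl.mpr haT'
  set q₀ := (T'.1ᶜ.orderIsoOfFin (cemb_card T')).symm ⟨a, haC⟩ with hq₀
  have hca : cemb T' q₀ = a := by
    have := congrArg Subtype.val (orderIso_cemb T' q₀)
    rw [hq₀, OrderIso.apply_symm_apply] at this
    exact this.symm
  refine ⟨a, cemb T q₀, ?_, ?_⟩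
  · intro e
    exact absurd (e ▸ haT) (Finset.mem_compl.mp (cemb_mem T q₀))
  · rw [gfun_cemb T T' q₀, hca, gfun, dif_neg (by simp [haT])]

lemma gmix_col {n ℓ : ℕ} (T T' : SS n ℓ) :
    det ((Amat n).submatrix id (gfun T T')) = if T = T' then Del n else 0 := by
  split_ifs with h
  · subst h; rw [gfun_self, Matrix.submatrix_id_id, Del]
  · obtain ⟨j₁, j₂, hne, he⟩ := exists_pair_of_ne T T' h
    exact Matrix.det_zero_of_column_eq hne fun k => by
      simp only [Matrix.submatrix_apply, id_eq, he]

lemma gmix_row {n ℓ : ℕ} (T T' : SS n ℓ) :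
    det ((Amat n).submatrix (gfun T T') id) = if T = T' then Del n else 0 := by
  split_ifs with h
  · subst h; rw [gfun_self, Matrix.submatrix_id_id, Del]
  · obtain ⟨j₁, j₂, hne, he⟩ := exists_pair_of_ne T T' h
    exact Matrix.det_zero_of_row_eq hne (by
      funext k
      simp only [Matrix.submatrix_apply, id_eq, he])

lemma KI_col {n ℓ : ℕ} (hℓ : ℓ ≤ n) (T T' : SS n ℓ) :
    ∑ S : SS n ℓ, ((sg hℓ S : ℤ) : MvP n) *
        (det ((Amat n).submatrix (emb S) (emb T)) * det ((Amat n).submatrix (cemb S) (cemb T')))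
      = if T = T' then ((sg hℓ T : ℤ) : MvP n) * Del n else 0 := by
  have hl := laplace hℓ ((Amat n).submatrix id (gfun T T')) T
  have h1 : ∀ S : SS n ℓ, ((Amat n).submatrix id (gfun T T')).submatrix (emb S) (emb T)
      = (Amat n).submatrix (emb S) (emb T) := fun S => by
    rw [Matrix.submatrix_submatrix, Function.id_comp,
      show gfun T T' ∘ emb T = emb T from funext (gfun_emb T T')]
  have h2 : ∀ S : SS n ℓ, ((Amat n).submatrix id (gfun T T')).submatrix (cemb S) (cemb T)
      = (Amat n).submatrix (cemb S) (cemb T') := fun S => by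
    rw [Matrix.submatrix_submatrix, Function.id_comp,
      show gfun T T' ∘ cemb T = cemb T' from funext (gfun_cemb T T')]
  simp only [h1, h2, gmix_col T T'] at hl
  rw [hl]
  split_ifs with h
  · rfl
  · rw [mul_zero]

lemma KI_row {n ℓ : ℕ} (hℓ : ℓ ≤ n) (S S' : SS n ℓ) :
    ∑ T : SS n ℓ, ((sg hℓ T : ℤ) : MvP n) *
        (det ((Amat n).submatrix (emb S) (emb T)) * det ((Amat n).submatrix (cemb S') (cemb T)))
      = if S = S' then ((sg hℓ S : ℤ) : MvP n) * Del n else 0 := by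
  have hl := laplace hℓ (((Amat n).submatrix (gfun S S') id)ᵀ) S
  have h1 : ∀ T : SS n ℓ, (((Amat n).submatrix (gfun S S') id)ᵀ).submatrix (emb T) (emb S)
      = ((Amat n).submatrix (emb S) (emb T))ᵀ := fun T => by
    rw [← Matrix.transpose_submatrix, Matrix.submatrix_submatrix, Function.id_comp,
      show gfun S S' ∘ emb S = emb S from funext (gfun_emb S S')]
  have h2 : ∀ T : SS n ℓ, (((Amat n).submatrix (gfun S S') id)ᵀ).submatrix (cemb T) (cemb S)
      = ((Amat n).submatrix (cemb S') (cemb T))ᵀ := fun T => by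
    rw [← Matrix.transpose_submatrix, Matrix.submatrix_submatrix, Function.id_comp,
      show gfun S S' ∘ cemb S = cemb S' from funext (gfun_cemb S S')]
  simp only [h1, h2, Matrix.det_transpose, gmix_row S S'] at hl
  rw [hl]
  split_ifs with h
  · rfl
  · rw [mul_zero]


/-! ### Divisibility by the Vandermonde determinant -/

lemma aux_prod_dvd {α : Type*} [CommMonoidWithZero α] [IsCancelMulZero α] {ι : Type*} [DecidableEq ι]
    (s : Finset ι) (f : ι → α) :
    (∀ x ∈ s, Prime (f x)) → (∀ x ∈ s, ∀ y ∈ s, x ≠ y → ¬ f x ∣ f y) →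
    ∀ h : α, (∀ x ∈ s, f x ∣ h) → (∏ x ∈ s, f x) ∣ h := by
  induction s using Finset.induction_on with
  | empty => intro _ _ h _; simpa using one_dvd h
  | insert a s hna ih =>
    intro hp hassoc h hdvd
    obtain ⟨h', rfl⟩ := hdvd a (Finset.mem_insert_self a s)
    rw [Finset.prod_insert hna]
    refine mul_dvd_mul_left (f a) ?_
    refine ih (fun x hx => hp x (Finset.mem_insert_of_mem hx))
      (fun x hx y hy hxy =>
        hassoc x (Finset.mem_insert_of_mem hx) y (Finset.mem_insert_of_mem hy) hxy) h' ?_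
    intro x hx
    have hxa : x ≠ a := fun e => hna (e ▸ hx)
    rcases (hp x (Finset.mem_insert_of_mem hx)).2.2 (f a) h'
        (hdvd x (Finset.mem_insert_of_mem hx)) with h1 | h2
    · exact absurd h1 (hassoc x (Finset.mem_insert_of_mem hx) a (Finset.mem_insert_self a s) hxa)
    · exact h2

def sub1 {n : ℕ} (i j : Fin n) : MvP n →ₐ[ℂ] MvP n := aeval (Function.update X j (X i))

lemma sub1_X {n : ℕ} (i j s : Fin n) :
    sub1 i j (X s) = if s = j then X i else X s := by
  rw [sub1, aeval_X, Function.update_apply]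

lemma sub1_dvd_sub {n : ℕ} (i j : Fin n) (p : MvP n) :
    (X j - X i : MvP n) ∣ p - sub1 i j p := by
  induction p using MvPolynomial.induction_on with
  | C a => simp [sub1]
  | add p q hp hq =>
    rw [map_add, show p + q - (sub1 i j p + sub1 i j q)
      = (p - sub1 i j p) + (q - sub1 i j q) by ring]
    exact dvd_add hp hq
  | mul_X p s hp =>
    rw [_root_.map_mul, show p * X s - sub1 i j p * sub1 i j (X s)
      = (p - sub1 i j p) * X s + sub1 i j p * (X s - sub1 i j (X s)) by ring]
    refine dvd_add (Dvd.dvd.mul_right hp _) (Dvd.dvd.mul_left ?_ _)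
    rw [sub1_X]
    split_ifs with h
    · subst h; exact dvd_refl _
    · simp

lemma dvd_iff_sub1 {n : ℕ} (i j : Fin n) (hij : i ≠ j) (p : MvP n) :
    (X j - X i : MvP n) ∣ p ↔ sub1 i j p = 0 := by
  have hXX : sub1 i j (X j - X i : MvP n) = 0 := by
    rw [map_sub, sub1_X, sub1_X, if_pos rfl, if_neg hij, sub_self]
  constructor
  · rintro ⟨q, rfl⟩
    rw [_root_.map_mul, hXX, zero_mul]
  · intro h
    have := sub1_dvd_sub i j p
    rwa [h, sub_zero] at this

lemma prime_XsubX {n : ℕ} (i j : Fin n) (hij : i ≠ j) : Prime (X j - X i : MvP n) := by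
  refine ⟨X_sub_X_ne hij, ?_, ?_⟩
  · intro hu
    have h0 : sub1 i j (X j - X i : MvP n) = 0 :=
      (dvd_iff_sub1 i j hij _).mp dvd_rfl
    have := hu.map (sub1 i j)
    rw [h0] at this
    exact not_isUnit_zero this
  · intro a b hdvd
    rw [dvd_iff_sub1 i j hij, _root_.map_mul] at hdvd
    rcases mul_eq_zero.mp hdvd with h | h
    · exact Or.inl ((dvd_iff_sub1 i j hij a).mpr h)
    · exact Or.inr ((dvd_iff_sub1 i j hij b).mpr h)

lemma not_assoc {n : ℕ} (i j k l : Fin n) (hij : i < j) (hkl : k < l)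
    (hne : (i, j) ≠ (k, l)) : ¬ (X j - X i : MvP n) ∣ (X l - X k : MvP n) := by
  rw [dvd_iff_sub1 i j hij.ne, map_sub, sub1_X, sub1_X]
  split_ifs with h1 h2 h2
  · subst h1; exact absurd (h2 ▸ hkl) (lt_irrefl _)
  · subst h1
    intro e
    have hik : i = k := MvPolynomial.X_injective (sub_eq_zero.mp e)
    exact hne (by rw [hik])
  · subst h2
    intro e
    have : l = i := MvPolynomial.X_injective (sub_eq_zero.mp e)
    subst this
    exact absurd (hij.trans hkl) (lt_irrefl _)
  · intro e
    have : l = k := MvPolynomial.X_injective (sub_eq_zero.mp e)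
    exact absurd (this ▸ hkl) (lt_irrefl _)

lemma sub1_eq_zero_of_antisym {n : ℕ} {i j : Fin n} (hij : i ≠ j) {p : MvP n}
    (hp : rename (Equiv.swap i j) p = -p) : sub1 i j p = 0 := by
  have hfun : (Function.update X j (X i : MvP n)) ∘ ⇑(Equiv.swap i j)
      = Function.update X j (X i) := by
    funext s
    rcases eq_or_ne s i with rfl | hsi
    · rw [Function.comp_apply, Equiv.swap_apply_left, Function.update_self,
        Function.update_of_ne hij]
    · rcases eq_or_ne s j with rfl | hsj
      · rw [Function.comp_apply, Equiv.swap_apply_right, Function.update_of_ne hij,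
          Function.update_self]
      · rw [Function.comp_apply, Equiv.swap_apply_of_ne_of_ne hsi hsj]
  have hcomp : sub1 i j (rename (Equiv.swap i j) p) = sub1 i j p := by
    rw [sub1, aeval_rename, hfun]
  rw [hp, map_neg] at hcomp
  have h2 : (2 : MvP n) * sub1 i j p = 0 := by linear_combination -hcomp
  have h2ne : (2 : MvP n) ≠ 0 := two_ne_zero
  exact (mul_eq_zero.mp h2).resolve_left h2ne

lemma rename_sign_of_adj {n : ℕ} {h : MvP n}
    (ha : ∀ i j : Fin n, (j : ℕ) = (i : ℕ) + 1 → rename (Equiv.swap i j) h = -h)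
    (σ : Equiv.Perm (Fin n)) :
    rename ⇑σ h = ((Equiv.Perm.sign σ : ℤ) : MvP n) * h := by
  cases n with
  | zero =>
    have hσ : σ = 1 := Subsingleton.elim σ 1
    subst hσ
    simp
  | succ m =>
    have hσ : σ ∈ Submonoid.closure
        (Set.range fun i : Fin m => Equiv.swap i.castSucc i.succ) := by
      rw [Equiv.Perm.mclosure_swap_castSucc_succ m]; trivial
    induction hσ using Submonoid.closure_induction with
    | mem x hx =>
      obtain ⟨i, rfl⟩ := hx
      rw [ha i.castSucc i.succ (by simp), Equiv.Perm.sign_swap (Fin.castSucc_lt_succ (i := i)).ne]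
      try push_cast
      try ring
    | one => simp
    | mul x y _ _ hx hy =>
      have hco : rename ⇑(x * y) h = rename ⇑x (rename ⇑y h) := by
        rw [Equiv.Perm.coe_mul, ← rename_rename]
      rw [hco, hy, _root_.map_mul, map_intCast, hx, Equiv.Perm.sign_mul]
      push_cast
      ring

lemma symm_of_adj {n : ℕ} {q : MvP n}
    (hq : ∀ i j : Fin n, (j : ℕ) = (i : ℕ) + 1 → rename (Equiv.swap i j) q = q) :
    MvPolynomial.IsSymmetric q := by
  intro σ
  cases n with
  | zero =>
    have hσ : σ = 1 := Subsingleton.elim σ 1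
    subst hσ
    simp
  | succ m =>
    have hσ : σ ∈ Submonoid.closure
        (Set.range fun i : Fin m => Equiv.swap i.castSucc i.succ) := by
      rw [Equiv.Perm.mclosure_swap_castSucc_succ m]; trivial
    induction hσ using Submonoid.closure_induction with
    | mem x hx =>
      obtain ⟨i, rfl⟩ := hx
      exact hq i.castSucc i.succ (by simp)
    | one => simp
    | mul x y _ _ hx hy =>
      have hco : rename ⇑(x * y) q = rename ⇑x (rename ⇑y q) := by
        rw [Equiv.Perm.coe_mul, ← rename_rename]
      rw [hco, hy, hx]

lemma rename_del (n : ℕ) (σ : Equiv.Perm (Fin n)) :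
    rename ⇑σ (Del n) = ((Equiv.Perm.sign σ : ℤ) : MvP n) * Del n := by
  have h1 : rename ⇑σ (Del n) = det ((Amat n).map (rename ⇑σ)) := by
    rw [Del]
    exact RingHom.map_det (rename (R := ℂ) ⇑σ).toRingHom (Amat n)
  have h2 : (Amat n).map (rename ⇑σ) = (Amat n).submatrix id ⇑σ := by
    ext k s
    simp [Amat, rename_X]
  rw [h1, h2, Matrix.det_permute']
  norm_cast

lemma del_dvd_of_adj_antisym {n : ℕ} {h : MvP n}
    (ha : ∀ i j : Fin n, (j : ℕ) = (i : ℕ) + 1 → rename (Equiv.swap i j) h = -h) :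
    ∃ q : MvP n, MvPolynomial.IsSymmetric q ∧ h = q * Del n := by
  have hall : ∀ i j : Fin n, i ≠ j → rename (Equiv.swap i j) h = -h := by
    intro i j hij
    rw [rename_sign_of_adj ha (Equiv.swap i j), Equiv.Perm.sign_swap hij]
    try push_cast
    try ring
  have hsig : Del n = ∏ x ∈ (Finset.univ.sigma fun i : Fin n => Finset.Ioi i),
      (X x.2 - X x.1 : MvP n) := by
    rw [del_eq, Finset.prod_sigma]
  have hmem : ∀ x ∈ (Finset.univ.sigma fun i : Fin n => Finset.Ioi i),
      (x : (_ : Fin n) × Fin n).1 < x.2 := by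
    intro x hx
    exact Finset.mem_Ioi.mp (Finset.mem_sigma.mp hx).2
  have hdvd : Del n ∣ h := by
    rw [hsig]
    refine aux_prod_dvd _ _ (fun x hx => prime_XsubX x.1 x.2 (hmem x hx).ne)
      (fun x hx y hy hxy => not_assoc x.1 x.2 y.1 y.2 (hmem x hx) (hmem y hy) ?_) h
      (fun x hx => (dvd_iff_sub1 x.1 x.2 (hmem x hx).ne _).mpr
        (sub1_eq_zero_of_antisym (hmem x hx).ne (hall x.1 x.2 (hmem x hx).ne)))
    intro e
    exact hxy (Sigma.ext (congrArg Prod.fst e) (heq_of_eq (congrArg Prod.snd e)))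
  obtain ⟨q, hq⟩ := hdvd
  refine ⟨q, ?_, by rw [hq, mul_comm]⟩
  apply symm_of_adj
  intro i j hji
  have hne : i ≠ j := fun e => by simp [e] at hji
  have h1 := hall i j hne
  have hsg : ((Equiv.Perm.sign (Equiv.swap i j) : ℤ) : MvP n) = -1 := by
    rw [Equiv.Perm.sign_swap hne]
    push_cast
    ring
  rw [hq, _root_.map_mul, rename_del n (Equiv.swap i j), hsg] at h1
  exact mul_left_cancel₀ (del_ne_zero n) (by linear_combination -h1)


/-! ### The basis vectors `wS` -/

lemma fin2_cases : ∀ x : Fin 2, x = 0 ∨ x = 1 := by decide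

def supp {n : ℕ} (J : Fin n → Fin 2) : Finset (Fin n) := Finset.univ.filter fun s => J s = 1

lemma mem_supp {n : ℕ} {J : Fin n → Fin 2} {s : Fin n} : s ∈ supp J ↔ J s = 1 := by
  simp [supp]

lemma cnt_eq {n : ℕ} (J : Fin n → Fin 2) : cnt J = (supp J).card := rfl

def ind {n : ℕ} (T : Finset (Fin n)) : Fin n → Fin 2 := fun s => if s ∈ T then 1 else 0

lemma supp_ind {n : ℕ} (T : Finset (Fin n)) : supp (ind T) = T := by
  ext s
  rw [mem_supp, ind]
  split_ifs with h
  · simp [h]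
  · simp [h]

lemma ind_supp {n : ℕ} (J : Fin n → Fin 2) : ind (supp J) = J := by
  funext s
  rw [ind]
  split_ifs with h
  · exact (mem_supp.mp h).symm
  · rcases fin2_cases (J s) with h0 | h1
    · exact h0.symm
    · exact absurd (mem_supp.mpr h1) h

lemma cnt_ind {n : ℕ} (T : Finset (Fin n)) : cnt (ind T) = T.card := by
  rw [cnt_eq, supp_ind]

lemma cnt_comp {n : ℕ} (J : Fin n → Fin 2) (e : Equiv.Perm (Fin n)) : cnt (J ∘ ⇑e) = cnt J := by
  unfold cnt
  apply Finset.card_bij (fun s _ => e s)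
  · intro a ha
    simp only [Finset.mem_filter, Finset.mem_univ, true_and, Function.comp_apply] at ha ⊢
    exact ha
  · intro a _ b _ hab
    exact e.injective hab
  · intro b hb
    simp only [Finset.mem_filter, Finset.mem_univ, true_and, Function.comp_apply] at hb ⊢
    exact ⟨e.symm b, by rw [Equiv.apply_symm_apply]; exact hb, Equiv.apply_symm_apply e b⟩

lemma eps_sq {n : ℕ} (i j : Fin n) (J : Fin n → Fin 2) : epsV i j J * epsV i j J = 1 := by
  rw [epsV]
  split_ifs <;> ring

lemma rename_f {n : ℕ} {f : Vsp n} (hf : stdInv n f) {i j : Fin n} (hji : (j : ℕ) = (i : ℕ) + 1)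
    (J : Fin n → Fin 2) :
    rename ⇑(Equiv.swap i j) (f J)
      = epsV i j (J ∘ ⇑(Equiv.swap i j)) * f (J ∘ ⇑(Equiv.swap i j)) := by
  have h1 := hf i j hji (J ∘ ⇑(Equiv.swap i j))
  have h2 : (J ∘ ⇑(Equiv.swap i j)) ∘ ⇑(Equiv.swap i j) = J := by
    funext s
    simp [Function.comp_apply, Equiv.swap_apply_self]
  rw [h2] at h1
  rw [h1, ← mul_assoc, eps_sq, one_mul]

lemma ind_comp {n : ℕ} (T : Finset (Fin n)) (i j : Fin n) :
    ind T ∘ ⇑(Equiv.swap i j) = ind (T.image ⇑(Equiv.swap i j)) := by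
  funext s
  have hiff : s ∈ T.image ⇑(Equiv.swap i j) ↔ Equiv.swap i j s ∈ T := by
    constructor
    · rintro h
      obtain ⟨t, ht, rfl⟩ := Finset.mem_image.mp h
      rwa [Equiv.swap_apply_self]
    · intro h
      exact Finset.mem_image.mpr ⟨_, h, Equiv.swap_apply_self i j s⟩
  simp only [Function.comp_apply, ind]
  split_ifs with h1 h2 h2
  · rfl
  · exact absurd (hiff.mpr h1) h2
  · exact absurd (hiff.mp h2) h1
  · rfl

lemma swap_sm {n : ℕ} {i j : Fin n} (hji : (j : ℕ) = (i : ℕ) + 1) {U : Finset (Fin n)}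
    (hU : i ∉ U ∨ j ∉ U) {a b : Fin n} (ha : a ∈ U) (hb : b ∈ U) (hab : a < b) :
    Equiv.swap i j a < Equiv.swap i j b := by
  have hvi : ∀ x : Fin n, x ≠ i → (x : ℕ) ≠ (i : ℕ) := fun x hx e => hx (Fin.ext e)
  have hvj : ∀ x : Fin n, x ≠ j → (x : ℕ) ≠ (j : ℕ) := fun x hx e => hx (Fin.ext e)
  rcases hU with hiU | hjU
  · have hai : a ≠ i := fun e => hiU (e ▸ ha)
    have hbi : b ≠ i := fun e => hiU (e ▸ hb)
    by_cases haj : a = j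
    · have hbj : b ≠ j := fun e => absurd hab (by rw [haj, e]; exact lt_irrefl _)
      rw [haj, Equiv.swap_apply_right, Equiv.swap_apply_of_ne_of_ne hbi hbj]
      have h1 := hvi b hbi
      have h2 := hvj b hbj
      have h3 : (a : ℕ) = (j : ℕ) := congrArg Fin.val haj
      rw [Fin.lt_def] at hab ⊢
      omega
    · by_cases hbj : b = j
      · rw [hbj, Equiv.swap_apply_right, Equiv.swap_apply_of_ne_of_ne hai haj]
        have h1 := hvi a hai
        have h2 := hvj a haj
        have h3 : (b : ℕ) = (j : ℕ) := congrArg Fin.val hbj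
        rw [Fin.lt_def] at hab ⊢
        omega
      · rw [Equiv.swap_apply_of_ne_of_ne hai haj, Equiv.swap_apply_of_ne_of_ne hbi hbj]
        exact hab
  · have haj : a ≠ j := fun e => hjU (e ▸ ha)
    have hbj : b ≠ j := fun e => hjU (e ▸ hb)
    by_cases hai : a = i
    · have hbi : b ≠ i := fun e => absurd hab (by rw [hai, e]; exact lt_irrefl _)
      rw [hai, Equiv.swap_apply_left, Equiv.swap_apply_of_ne_of_ne hbi hbj]
      have h1 := hvi b hbi
      have h2 := hvj b hbj
      have h3 : (a : ℕ) = (i : ℕ) := congrArg Fin.val hai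
      rw [Fin.lt_def] at hab ⊢
      omega
    · by_cases hbi : b = i
      · rw [hbi, Equiv.swap_apply_left, Equiv.swap_apply_of_ne_of_ne hai haj]
        have h1 := hvi a hai
        have h2 := hvj a haj
        have h3 : (b : ℕ) = (i : ℕ) := congrArg Fin.val hbi
        rw [Fin.lt_def] at hab ⊢
        omega
      · rw [Equiv.swap_apply_of_ne_of_ne hai haj, Equiv.swap_apply_of_ne_of_ne hbi hbj]
        exact hab

lemma comp_orderEmb_fix {n k : ℕ} {i j : Fin n} {U : Finset (Fin n)} (hU : U.card = k)
    (hi : i ∉ U) (hj : j ∉ U) :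
    ⇑(Equiv.swap i j) ∘ ⇑(U.orderEmbOfFin hU) = ⇑(U.orderEmbOfFin hU) := by
  funext p
  have hp := Finset.orderEmbOfFin_mem U hU p
  simp only [Function.comp_apply]
  exact Equiv.swap_apply_of_ne_of_ne (fun e => hi (e ▸ hp)) (fun e => hj (e ▸ hp))

lemma comp_orderEmb_swap {n k : ℕ} {i j : Fin n} (hij : i ≠ j) {U : Finset (Fin n)}
    (hU : U.card = k) (hi : i ∈ U) (hj : j ∈ U) :
    ∃ π : Equiv.Perm (Fin k), Equiv.Perm.sign π = -1 ∧
      ⇑(Equiv.swap i j) ∘ ⇑(U.orderEmbOfFin hU) = ⇑(U.orderEmbOfFin hU) ∘ ⇑π := by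
  set pi := (U.orderIsoOfFin hU).symm ⟨i, hi⟩ with hpidef
  set pj := (U.orderIsoOfFin hU).symm ⟨j, hj⟩ with hpjdef
  have hepi : U.orderEmbOfFin hU pi = i := by
    rw [← Finset.coe_orderIsoOfFin_apply, hpidef, OrderIso.apply_symm_apply]
  have hepj : U.orderEmbOfFin hU pj = j := by
    rw [← Finset.coe_orderIsoOfFin_apply, hpjdef, OrderIso.apply_symm_apply]
  have hne : pi ≠ pj := fun e => hij (by rw [← hepi, e, hepj])
  refine ⟨Equiv.swap pi pj, Equiv.Perm.sign_swap hne, ?_⟩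
  funext p
  simp only [Function.comp_apply]
  rcases eq_or_ne p pi with rfl | hpi
  · rw [hepi, Equiv.swap_apply_left, Equiv.swap_apply_left, hepj]
  · rcases eq_or_ne p pj with rfl | hpj
    · rw [hepj, Equiv.swap_apply_right, Equiv.swap_apply_right, hepi]
    · rw [Equiv.swap_apply_of_ne_of_ne
        (fun e => hpi ((U.orderEmbOfFin hU).injective (e.trans hepi.symm)))
        (fun e => hpj ((U.orderEmbOfFin hU).injective (e.trans hepj.symm))),
        Equiv.swap_apply_of_ne_of_ne hpi hpj]

lemma comp_orderEmb_mono {n k : ℕ} {i j : Fin n} (hji : (j : ℕ) = (i : ℕ) + 1)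
    {U V : Finset (Fin n)} (hU : U.card = k) (hV : V.card = k)
    (hmem : ∀ x ∈ U, Equiv.swap i j x ∈ V) (hnot : i ∉ U ∨ j ∉ U) :
    ⇑(Equiv.swap i j) ∘ ⇑(U.orderEmbOfFin hU) = ⇑(V.orderEmbOfFin hV) := by
  refine Finset.orderEmbOfFin_unique hV
    (fun p => hmem _ (Finset.orderEmbOfFin_mem U hU p)) ?_
  intro a b hab
  exact swap_sm hji hnot (Finset.orderEmbOfFin_mem U hU a) (Finset.orderEmbOfFin_mem U hU b)
    ((U.orderEmbOfFin hU).strictMono hab)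

lemma rename_msub {n k : ℕ} (σ : Equiv.Perm (Fin n)) (u v : Fin k → Fin n) :
    rename ⇑σ (det ((Amat n).submatrix u v)) = det ((Amat n).submatrix u (⇑σ ∘ v)) := by
  rw [show rename (R := ℂ) ⇑σ (det ((Amat n).submatrix u v))
      = det (((Amat n).submatrix u v).map (rename ⇑σ)) from
    RingHom.map_det (rename (R := ℂ) ⇑σ).toRingHom _]
  congr 1
  ext p q
  simp [Amat, rename_X]

def wS {n ℓ : ℕ} (S : SS n ℓ) : Vsp n := fun J =>
  if h : cnt J = ℓ then
    det ((Amat n).submatrix (emb S) (emb (⟨supp J, by rw [← cnt_eq]; exact h⟩ : SS n ℓ)))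
  else 0

lemma emb_def {n ℓ : ℕ} (S : SS n ℓ) : emb S = ⇑(S.1.orderEmbOfFin S.2) := rfl

lemma cemb_def {n ℓ : ℕ} (S : SS n ℓ) : cemb S = ⇑(S.1ᶜ.orderEmbOfFin (cemb_card S)) := rfl

lemma wS_zero {n ℓ : ℕ} (S : SS n ℓ) {J} (h : cnt J ≠ ℓ) : wS S J = 0 := dif_neg h

lemma wS_pos {n ℓ : ℕ} (S : SS n ℓ) {J} (h : cnt J = ℓ) (T : SS n ℓ) (hT : T.1 = supp J) :
    wS S J = det ((Amat n).submatrix (emb S) (emb T)) := by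
  show dite _ _ _ = _
  rw [dif_pos h]
  exact congrArg (fun U : SS n ℓ => det ((Amat n).submatrix (emb S) (emb U)))
    (Subtype.ext hT.symm)

lemma wS_memWt {n ℓ : ℕ} (S : SS n ℓ) : memWt n ℓ (wS S) := fun _ h => wS_zero S h

theorem wS_stdInv {n ℓ : ℕ} (S : SS n ℓ) : stdInv n (wS S) := by
  intro i j hji J
  have hij : i ≠ j := Fin.ne_of_val_ne (by omega)
  have hcc : cnt (J ∘ ⇑(Equiv.swap i j)) = cnt J := cnt_comp J (Equiv.swap i j)
  by_cases hcnt : cnt J = ℓ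
  swap
  · rw [wS_zero S hcnt, wS_zero S (by rw [hcc]; exact hcnt), map_zero, mul_zero]
  have hTc : (supp J).card = ℓ := by rw [← cnt_eq]; exact hcnt
  set T : SS n ℓ := ⟨supp J, hTc⟩ with hTdef
  have hc2 : cnt (J ∘ ⇑(Equiv.swap i j)) = ℓ := by rw [hcc]; exact hcnt
  have hT'c : (supp (J ∘ ⇑(Equiv.swap i j))).card = ℓ := by rw [← cnt_eq]; exact hc2
  set T' : SS n ℓ := ⟨supp (J ∘ ⇑(Equiv.swap i j)), hT'c⟩ with hT'def
  have hmemT' : ∀ x ∈ T'.1, Equiv.swap i j x ∈ T.1 := by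
    intro x hx
    have hx' : x ∈ supp (J ∘ ⇑(Equiv.swap i j)) := hx
    have h1 : (J ∘ ⇑(Equiv.swap i j)) x = 1 := mem_supp.mp hx'
    have h2 : J (Equiv.swap i j x) = 1 := h1
    exact mem_supp.mpr h2
  rcases fin2_cases (J i) with hJi | hJi <;> rcases fin2_cases (J j) with hJj | hJj
  · -- J i = 0, J j = 0
    have hJσ : J ∘ ⇑(Equiv.swap i j) = J := by
      funext s
      rcases eq_or_ne s i with rfl | hsi
      · rw [Function.comp_apply, Equiv.swap_apply_left, hJj, hJi]
      rcases eq_or_ne s j with rfl | hsj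
      · rw [Function.comp_apply, Equiv.swap_apply_right, hJi, hJj]
      · rw [Function.comp_apply, Equiv.swap_apply_of_ne_of_ne hsi hsj]
    have hiT : i ∉ T.1 := by
      rw [hTdef]
      intro hmem
      rw [mem_supp.mp hmem] at hJi
      exact absurd hJi (by decide)
    have hjT : j ∉ T.1 := by
      rw [hTdef]
      intro hmem
      rw [mem_supp.mp hmem] at hJj
      exact absurd hJj (by decide)
    rw [hJσ, wS_pos S hcnt T rfl, rename_msub,
      show ⇑(Equiv.swap i j) ∘ emb T = emb T from comp_orderEmb_fix T.2 hiT hjT, epsV,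
      if_neg (fun hh : J i = 1 ∧ J j = 1 => by
        rw [hJi] at hh
        exact absurd hh.1 (by decide)), one_mul]
  · -- J i = 0, J j = 1 : split, i ∈ T', j ∉ T'
    have hjT' : j ∉ T'.1 := by
      rw [hT'def]
      intro hmem
      have := mem_supp.mp hmem
      rw [Function.comp_apply, Equiv.swap_apply_right, hJi] at this
      exact absurd this (by decide)
    have h1 : ⇑(Equiv.swap i j) ∘ emb T' = emb T := by
      rw [emb_def, emb_def]
      exact comp_orderEmb_mono hji T'.2 T.2 hmemT' (Or.inr hjT')
    rw [wS_pos S hcnt T rfl, wS_pos S hc2 T' rfl, rename_msub, h1, epsV,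
      if_neg (fun hh => by
        rw [hJi] at hh
        exact absurd hh.1 (by decide)), one_mul]
  · -- J i = 1, J j = 0 : split, i ∉ T', j ∈ T'
    have hiT' : i ∉ T'.1 := by
      rw [hT'def]
      intro hmem
      have := mem_supp.mp hmem
      rw [Function.comp_apply, Equiv.swap_apply_left, hJj] at this
      exact absurd this (by decide)
    have h1 : ⇑(Equiv.swap i j) ∘ emb T' = emb T := by
      rw [emb_def, emb_def]
      exact comp_orderEmb_mono hji T'.2 T.2 hmemT' (Or.inl hiT')
    rw [wS_pos S hcnt T rfl, wS_pos S hc2 T' rfl, rename_msub, h1, epsV,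
      if_neg (fun hh => by
        rw [hJj] at hh
        exact absurd hh.2 (by decide)), one_mul]
  · -- J i = 1, J j = 1
    have hJσ : J ∘ ⇑(Equiv.swap i j) = J := by
      funext s
      rcases eq_or_ne s i with rfl | hsi
      · rw [Function.comp_apply, Equiv.swap_apply_left, hJj, hJi]
      rcases eq_or_ne s j with rfl | hsj
      · rw [Function.comp_apply, Equiv.swap_apply_right, hJi, hJj]
      · rw [Function.comp_apply, Equiv.swap_apply_of_ne_of_ne hsi hsj]
    have hiT : i ∈ T.1 := by rw [hTdef]; exact mem_supp.mpr hJi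
    have hjT : j ∈ T.1 := by rw [hTdef]; exact mem_supp.mpr hJj
    obtain ⟨π, hsgn, hcomp⟩ := comp_orderEmb_swap hij T.2 hiT hjT
    rw [hJσ, wS_pos S hcnt T rfl, rename_msub,
      show ⇑(Equiv.swap i j) ∘ emb T = emb T ∘ ⇑π from hcomp,
      show (Amat n).submatrix (emb S) (emb T ∘ ⇑π)
        = ((Amat n).submatrix (emb S) (emb T)).submatrix id ⇑π from by
        rw [Matrix.submatrix_submatrix, Function.comp_id],
      Matrix.det_permute', hsgn, epsV, if_pos ⟨hJi, hJj⟩]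
    simp only [Units.val_neg, Units.val_one, Int.cast_neg, Int.cast_one]
    ring


/-! ### Spanning and independence cores -/

abbrev mS {n ℓ : ℕ} (S T : SS n ℓ) : MvP n := det ((Amat n).submatrix (emb S) (emb T))

abbrev mC {n ℓ : ℕ} (S T : SS n ℓ) : MvP n := det ((Amat n).submatrix (cemb S) (cemb T))

lemma unit_cast_mul_self {R : Type*} [CommRing R] (u : ℤˣ) : ((u : ℤ) : R) * ((u : ℤ) : R) = 1 := by
  rcases Int.units_eq_one_or u with h | h <;> rw [h] <;> norm_num

lemma unit_cast_ne_zero {R : Type*} [CommRing R] [Nontrivial R] (u : ℤˣ) :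
    ((u : ℤ) : R) ≠ 0 := by
  rcases Int.units_eq_one_or u with h | h <;> rw [h] <;> norm_num

def imgT {n ℓ : ℕ} (σ : Equiv.Perm (Fin n)) (T : SS n ℓ) : SS n ℓ :=
  ⟨T.1.image ⇑σ, by rw [Finset.card_image_of_injective _ σ.injective, T.2]⟩

lemma mem_imgT {n ℓ : ℕ} {i j : Fin n} {T : SS n ℓ} {s : Fin n} :
    s ∈ (imgT (Equiv.swap i j) T).1 ↔ Equiv.swap i j s ∈ T.1 := by
  constructor
  · intro h
    obtain ⟨t, ht, rfl⟩ := Finset.mem_image.mp h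
    rwa [Equiv.swap_apply_self]
  · intro h
    exact Finset.mem_image.mpr ⟨_, h, Equiv.swap_apply_self i j s⟩

lemma imgT_invol {n ℓ : ℕ} (i j : Fin n) :
    Function.Involutive (imgT (n := n) (ℓ := ℓ) (Equiv.swap i j)) := by
  intro T
  apply Subtype.ext
  apply Finset.ext
  intro s
  rw [show (imgT (Equiv.swap i j) (imgT (Equiv.swap i j) T)).1
      = ((imgT (Equiv.swap i j) T).1).image ⇑(Equiv.swap i j) from rfl]
  constructor
  · intro h
    obtain ⟨t, ht, rfl⟩ := Finset.mem_image.mp h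
    exact mem_imgT.mp ht
  · intro h
    exact Finset.mem_image.mpr ⟨Equiv.swap i j s,
      mem_imgT.mpr (by rwa [Equiv.swap_apply_self]), Equiv.swap_apply_self i j s⟩

lemma imgT_same {n ℓ : ℕ} {i j : Fin n} {T : SS n ℓ} (h : (i ∈ T.1 ∧ j ∈ T.1) ∨ (i ∉ T.1 ∧ j ∉ T.1)) :
    imgT (Equiv.swap i j) T = T := by
  apply Subtype.ext
  apply Finset.ext
  intro s
  rw [show (imgT (Equiv.swap i j) T).1 = T.1.image ⇑(Equiv.swap i j) from rfl]
  have hiff : s ∈ T.1.image ⇑(Equiv.swap i j) ↔ Equiv.swap i j s ∈ T.1 := mem_imgT (T := T)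
  rw [hiff]
  rcases eq_or_ne s i with rfl | hsi
  · rw [Equiv.swap_apply_left]
    rcases h with ⟨h1, h2⟩ | ⟨h1, h2⟩ <;> simp [h1, h2]
  · rcases eq_or_ne s j with rfl | hsj
    · rw [Equiv.swap_apply_right]
      rcases h with ⟨h1, h2⟩ | ⟨h1, h2⟩ <;> simp [h1, h2]
    · rw [Equiv.swap_apply_of_ne_of_ne hsi hsj]

lemma emb_imgT {n ℓ : ℕ} {i j : Fin n} (hji : (j : ℕ) = (i : ℕ) + 1) (T : SS n ℓ)
    (hnot : i ∉ T.1 ∨ j ∉ T.1) :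
    ⇑(Equiv.swap i j) ∘ emb T = emb (imgT (Equiv.swap i j) T) := by
  rw [emb_def, emb_def]
  exact comp_orderEmb_mono hji T.2 (imgT (Equiv.swap i j) T).2
    (fun x hx => Finset.mem_image_of_mem _ hx) hnot

lemma cemb_imgT {n ℓ : ℕ} {i j : Fin n} (hji : (j : ℕ) = (i : ℕ) + 1) (T : SS n ℓ)
    (hnot : i ∉ T.1ᶜ ∨ j ∉ T.1ᶜ) :
    ⇑(Equiv.swap i j) ∘ cemb T = cemb (imgT (Equiv.swap i j) T) := by
  rw [cemb_def, cemb_def]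
  refine comp_orderEmb_mono hji (cemb_card T) (cemb_card (imgT (Equiv.swap i j) T))
    (fun x hx => ?_) hnot
  rw [Finset.mem_compl] at hx ⊢
  intro hmem
  refine hx ?_
  have h5 := mem_imgT.mp hmem
  rwa [Equiv.swap_apply_self] at h5

lemma prm_imgT {n ℓ : ℕ} (hℓ : ℓ ≤ n) {i j : Fin n} (hji : (j : ℕ) = (i : ℕ) + 1) (T : SS n ℓ)
    (hsplit : (i ∈ T.1 ∧ j ∉ T.1) ∨ (i ∉ T.1 ∧ j ∈ T.1)) :
    prm hℓ (imgT (Equiv.swap i j) T) = Equiv.swap i j * prm hℓ T := by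
  have hnot : i ∉ T.1 ∨ j ∉ T.1 := by
    rcases hsplit with ⟨h1, h2⟩ | ⟨h1, h2⟩
    · exact Or.inr h2
    · exact Or.inl h1
  have hnotc : i ∉ T.1ᶜ ∨ j ∉ T.1ᶜ := by
    rcases hsplit with ⟨h1, h2⟩ | ⟨h1, h2⟩
    · exact Or.inl (by simpa using h1)
    · exact Or.inr (by simpa using h2)
  have h1 := emb_imgT hji T hnot
  have h2 := cemb_imgT hji T hnotc
  apply Equiv.ext
  intro x
  obtain ⟨y, rfl⟩ := (e0 hℓ).surjective x
  cases y with
  | inl p =>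
    rw [prm_inl, Equiv.Perm.mul_apply, prm_inl, ← h1]
    rfl
  | inr q =>
    rw [prm_inr, Equiv.Perm.mul_apply, prm_inr, ← h2]
    rfl

lemma sg_imgT {n ℓ : ℕ} (hℓ : ℓ ≤ n) {i j : Fin n} (hij : i ≠ j)
    (hji : (j : ℕ) = (i : ℕ) + 1) (T : SS n ℓ)
    (hsplit : (i ∈ T.1 ∧ j ∉ T.1) ∨ (i ∉ T.1 ∧ j ∈ T.1)) :
    sg hℓ (imgT (Equiv.swap i j) T) = - sg hℓ T := by
  rw [sg, prm_imgT hℓ hji T hsplit, Equiv.Perm.sign_mul, Equiv.Perm.sign_swap hij, sg,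
    neg_one_mul]

def hpol {n ℓ : ℕ} (hℓ : ℓ ≤ n) (f : Vsp n) (S : SS n ℓ) : MvP n :=
  ∑ T : SS n ℓ, ((sg hℓ T : ℤ) : MvP n) * f (ind T.1) * mC S T

lemma ind_imgT {n ℓ : ℕ} (i j : Fin n) (T : SS n ℓ) :
    ind T.1 ∘ ⇑(Equiv.swap i j) = ind ((imgT (Equiv.swap i j) T).1) := ind_comp T.1 i j

lemma hpol_term_antisym {n ℓ : ℕ} (hℓ : ℓ ≤ n) {f : Vsp n} (hf : stdInv n f) (S : SS n ℓ)
    {i j : Fin n} (hji : (j : ℕ) = (i : ℕ) + 1) (T : SS n ℓ) :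
    rename ⇑(Equiv.swap i j) (((sg hℓ T : ℤ) : MvP n) * f (ind T.1) * mC S T)
      = -(((sg hℓ (imgT (Equiv.swap i j) T) : ℤ) : MvP n)
          * f (ind ((imgT (Equiv.swap i j) T)).1) * mC S (imgT (Equiv.swap i j) T)) := by
  have hij : i ≠ j := Fin.ne_of_val_ne (by omega)
  have hrf : rename ⇑(Equiv.swap i j) (f (ind T.1))
      = epsV i j (ind ((imgT (Equiv.swap i j) T).1)) * f (ind ((imgT (Equiv.swap i j) T)).1) := by
    rw [rename_f hf hji, ind_imgT]
  have hdet : rename ⇑(Equiv.swap i j) (mC S T)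
      = det ((Amat n).submatrix (cemb S) (⇑(Equiv.swap i j) ∘ cemb T)) := rename_msub _ _ _
  rw [_root_.map_mul, _root_.map_mul, map_intCast, hrf, hdet]
  by_cases hiT : i ∈ T.1 <;> by_cases hjT : j ∈ T.1
  · -- both in T
    have hsame : imgT (Equiv.swap i j) T = T := imgT_same (Or.inl ⟨hiT, hjT⟩)
    rw [hsame]
    have heps : epsV i j (ind T.1) = -1 := by
      rw [epsV, if_pos ⟨by rw [ind]; rw [if_pos hiT], by rw [ind]; rw [if_pos hjT]⟩]
    have hfix : ⇑(Equiv.swap i j) ∘ cemb T = cemb T := by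
      rw [cemb_def]
      exact comp_orderEmb_fix (cemb_card T) (by simpa using hiT) (by simpa using hjT)
    rw [heps, hfix]
    unfold mC
    ring
  · -- split : i in, j out
    have heps : epsV i j (ind ((imgT (Equiv.swap i j) T)).1) = 1 := by
      rw [epsV, if_neg]
      rintro ⟨h1, h2⟩
      rw [ind] at h1
      split_ifs at h1 with hmem
      · exact hjT (by rwa [← Equiv.swap_apply_left i j, ← mem_imgT (T := T)])
      · exact absurd h1 (by decide)
    have hmix : ⇑(Equiv.swap i j) ∘ cemb T = cemb (imgT (Equiv.swap i j) T) :=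
      cemb_imgT hji T (Or.inl (by simpa using hiT))
    have hsg : sg hℓ (imgT (Equiv.swap i j) T) = - sg hℓ T :=
      sg_imgT hℓ hij hji T (Or.inl ⟨hiT, hjT⟩)
    rw [heps, hmix, hsg]
    unfold mC
    push_cast
    ring
  · -- split : i out, j in
    have heps : epsV i j (ind ((imgT (Equiv.swap i j) T)).1) = 1 := by
      rw [epsV, if_neg]
      rintro ⟨h1, h2⟩
      rw [ind] at h2
      split_ifs at h2 with hmem
      · exact hiT (by rwa [← Equiv.swap_apply_right i j, ← mem_imgT (T := T)])
      · exact absurd h2 (by decide)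
    have hmix : ⇑(Equiv.swap i j) ∘ cemb T = cemb (imgT (Equiv.swap i j) T) :=
      cemb_imgT hji T (Or.inr (by simpa using hjT))
    have hsg : sg hℓ (imgT (Equiv.swap i j) T) = - sg hℓ T :=
      sg_imgT hℓ hij hji T (Or.inr ⟨hiT, hjT⟩)
    rw [heps, hmix, hsg]
    unfold mC
    push_cast
    ring
  · -- both out
    have hsame : imgT (Equiv.swap i j) T = T := imgT_same (Or.inr ⟨hiT, hjT⟩)
    rw [hsame]
    have heps : epsV i j (ind T.1) = 1 := by
      rw [epsV, if_neg]
      rintro ⟨h1, h2⟩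
      rw [ind, if_neg hiT] at h1
      exact absurd h1 (by decide)
    obtain ⟨π, hsgn, hcomp⟩ := comp_orderEmb_swap hij (cemb_card T)
      (Finset.mem_compl.mpr hiT) (Finset.mem_compl.mpr hjT)
    rw [heps,
      show ⇑(Equiv.swap i j) ∘ cemb T = cemb T ∘ ⇑π from hcomp,
      show (Amat n).submatrix (cemb S) (cemb T ∘ ⇑π)
        = ((Amat n).submatrix (cemb S) (cemb T)).submatrix id ⇑π from by
        rw [Matrix.submatrix_submatrix, Function.comp_id],
      Matrix.det_permute', hsgn]
    unfold mC
    simp only [Units.val_neg, Units.val_one, Int.cast_neg, Int.cast_one]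
    ring

lemma hpol_antisym {n ℓ : ℕ} (hℓ : ℓ ≤ n) {f : Vsp n} (hf : stdInv n f) (S : SS n ℓ)
    (i j : Fin n) (hji : (j : ℕ) = (i : ℕ) + 1) :
    rename ⇑(Equiv.swap i j) (hpol hℓ f S) = - hpol hℓ f S := by
  rw [hpol, map_sum]
  have h1 : ∀ T : SS n ℓ, rename ⇑(Equiv.swap i j) (((sg hℓ T : ℤ) : MvP n) * f (ind T.1) * mC S T)
      = -(((sg hℓ (imgT (Equiv.swap i j) T) : ℤ) : MvP n)
          * f (ind ((imgT (Equiv.swap i j) T)).1) * mC S (imgT (Equiv.swap i j) T)) :=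
    hpol_term_antisym hℓ hf S hji
  rw [Finset.sum_congr rfl (fun T _ => h1 T), Finset.sum_neg_distrib]
  exact congrArg Neg.neg (Equiv.sum_comp ((imgT_invol (n := n) (ℓ := ℓ) i j).toPerm)
    (fun T => ((sg hℓ T : ℤ) : MvP n) * f (ind T.1) * mC S T))

lemma exists_c {n ℓ : ℕ} (hℓ : ℓ ≤ n) (f : Vsp n) (hf : stdInv n f) :
    ∃ c : SS n ℓ → MvP n, (∀ S, (c S).IsSymmetric) ∧
      ∀ S, c S * Del n = ((sg hℓ S : ℤ) : MvP n) * hpol hℓ f S := by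
  have key : ∀ S : SS n ℓ, ∃ q : MvP n, MvPolynomial.IsSymmetric q ∧
      ((sg hℓ S : ℤ) : MvP n) * hpol hℓ f S = q * Del n := by
    intro S
    apply del_dvd_of_adj_antisym
    intro i j hji
    rw [_root_.map_mul, map_intCast, hpol_antisym hℓ hf S i j hji]
    ring
  choose c h1 h2 using key
  exact ⟨c, h1, fun S => (h2 S).symm⟩

lemma span_core {n ℓ : ℕ} (hℓ : ℓ ≤ n) (f : Vsp n) {c : SS n ℓ → MvP n}
    (hc : ∀ S, c S * Del n = ((sg hℓ S : ℤ) : MvP n) * hpol hℓ f S) (T₀ : SS n ℓ) :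
    ∑ S : SS n ℓ, c S * mS S T₀ = f (ind T₀.1) := by
  apply mul_right_cancel₀ (del_ne_zero n)
  calc (∑ S : SS n ℓ, c S * mS S T₀) * Del n
      = ∑ S : SS n ℓ, (c S * Del n) * mS S T₀ := by
        rw [Finset.sum_mul]
        exact Finset.sum_congr rfl fun S _ => by ring
    _ = ∑ S : SS n ℓ, ((sg hℓ S : ℤ) : MvP n) * hpol hℓ f S * mS S T₀ := by
        exact Finset.sum_congr rfl fun S _ => by rw [hc S]
    _ = ∑ S : SS n ℓ, ∑ T : SS n ℓ, (((sg hℓ T : ℤ) : MvP n) * f (ind T.1))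
          * (((sg hℓ S : ℤ) : MvP n) * (mS S T₀ * mC S T)) := by
        refine Finset.sum_congr rfl fun S _ => ?_
        rw [hpol, Finset.mul_sum, Finset.sum_mul]
        exact Finset.sum_congr rfl fun T _ => by ring
    _ = ∑ T : SS n ℓ, (((sg hℓ T : ℤ) : MvP n) * f (ind T.1))
          * (∑ S : SS n ℓ, ((sg hℓ S : ℤ) : MvP n) * (mS S T₀ * mC S T)) := by
        rw [Finset.sum_comm]
        exact Finset.sum_congr rfl fun T _ => by rw [Finset.mul_sum]
    _ = ∑ T : SS n ℓ, (((sg hℓ T : ℤ) : MvP n) * f (ind T.1))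
          * (if T₀ = T then ((sg hℓ T₀ : ℤ) : MvP n) * Del n else 0) := by
        exact Finset.sum_congr rfl fun T _ => by rw [KI_col hℓ T₀ T]
    _ = f (ind T₀.1) * Del n := by
        rw [Finset.sum_eq_single T₀]
        · rw [if_pos rfl, show ((sg hℓ T₀ : ℤ) : MvP n) * f (ind T₀.1)
            * (((sg hℓ T₀ : ℤ) : MvP n) * Del n)
            = (((sg hℓ T₀ : ℤ) : MvP n) * ((sg hℓ T₀ : ℤ) : MvP n)) * (f (ind T₀.1) * Del n)
            from by ring, unit_cast_mul_self, one_mul]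
        · intro T _ hT
          rw [if_neg (fun e => hT e.symm), mul_zero]
        · intro h
          exact absurd (Finset.mem_univ T₀) h

lemma indep_core {n ℓ : ℕ} (hℓ : ℓ ≤ n) {c : SS n ℓ → MvP n}
    (hc : ∀ T : SS n ℓ, ∑ S : SS n ℓ, c S * mS S T = 0) (S₀ : SS n ℓ) : c S₀ = 0 := by
  have h1 : ∑ T : SS n ℓ, ((sg hℓ T : ℤ) : MvP n) * mC S₀ T
      * (∑ S : SS n ℓ, c S * mS S T) = 0 := by
    refine Finset.sum_eq_zero fun T _ => ?_
    rw [hc T, mul_zero]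
  have h2 : ∑ T : SS n ℓ, ((sg hℓ T : ℤ) : MvP n) * mC S₀ T * (∑ S : SS n ℓ, c S * mS S T)
      = ∑ S : SS n ℓ, c S * (∑ T : SS n ℓ, ((sg hℓ T : ℤ) : MvP n) * (mS S T * mC S₀ T)) := by
    calc ∑ T : SS n ℓ, ((sg hℓ T : ℤ) : MvP n) * mC S₀ T * (∑ S : SS n ℓ, c S * mS S T)
        = ∑ T : SS n ℓ, ∑ S : SS n ℓ,
            ((sg hℓ T : ℤ) : MvP n) * mC S₀ T * (c S * mS S T) :=
          Finset.sum_congr rfl fun T _ => by rw [Finset.mul_sum]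
      _ = ∑ S : SS n ℓ, ∑ T : SS n ℓ,
            ((sg hℓ T : ℤ) : MvP n) * mC S₀ T * (c S * mS S T) := Finset.sum_comm
      _ = ∑ S : SS n ℓ, c S * (∑ T : SS n ℓ, ((sg hℓ T : ℤ) : MvP n) * (mS S T * mC S₀ T)) := by
          refine Finset.sum_congr rfl fun S _ => ?_
          rw [Finset.mul_sum]
          exact Finset.sum_congr rfl fun T _ => by ring
  rw [h2] at h1
  have h3 : ∀ S : SS n ℓ, c S * (∑ T : SS n ℓ, ((sg hℓ T : ℤ) : MvP n) * (mS S T * mC S₀ T))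
      = c S * (if S = S₀ then ((sg hℓ S : ℤ) : MvP n) * Del n else 0) := by
    intro S
    rw [KI_row hℓ S S₀]
  rw [Finset.sum_congr rfl (fun S _ => h3 S), Finset.sum_eq_single S₀] at h1
  · rw [if_pos rfl] at h1
    have hne : ((sg hℓ S₀ : ℤ) : MvP n) * Del n ≠ 0 :=
      mul_ne_zero (unit_cast_ne_zero _) (del_ne_zero n)
    rcases mul_eq_zero.mp h1 with h | h
    · exact h
    · exact absurd h hne
  · intro T _ hT
    rw [if_neg hT, mul_zero]
  · intro h
    exact absurd (Finset.mem_univ S₀) h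


/-! ### Packaging -/

lemma card_le_n {n : ℕ} (U : Finset (Fin n)) : U.card ≤ n :=
  (Finset.card_le_univ U).trans (by simp)

lemma cnt_le {n : ℕ} (J : Fin n → Fin 2) : cnt J ≤ n := by
  rw [cnt_eq]
  exact card_le_n _

def eqvFin (n ℓ : ℕ) : Fin (n.choose ℓ) ≃ SS n ℓ :=
  (Fintype.equivFinOfCardEq (by rw [Fintype.card_finset_len, Fintype.card_fin])).symm

def eqvFin2 (n : ℕ) : Fin (2 ^ n) ≃ Finset (Fin n) :=
  (Fintype.equivFinOfCardEq (by rw [Fintype.card_finset, Fintype.card_fin])).symm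

lemma sum_W_eval {n k : ℕ} (d : Finset (Fin n) → MvP n) (J : Fin n → Fin 2) (hJ : cnt J = k)
    (T₀ : SS n k) (hT₀ : T₀.1 = supp J) :
    ∑ U : Finset (Fin n), d U * wS (⟨U, rfl⟩ : SS n U.card) J
      = ∑ S : SS n k, d S.1 * mS S T₀ := by
  have hvan : ∀ U ∈ (Finset.univ : Finset (Finset (Fin n))),
      d U * wS (⟨U, rfl⟩ : SS n U.card) J ≠ 0 → U.card = k := by
    intro U _ hne
    by_contra hUk
    refine hne ?_
    rw [wS_zero _ (fun e => hUk (by rw [← e]; exact hJ)), mul_zero]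
  rw [← Finset.sum_filter_of_ne hvan]
  rw [Finset.sum_subtype (p := fun U : Finset (Fin n) => U.card = k)
    (Finset.univ.filter fun U : Finset (Fin n) => U.card = k)
    (by simp) (fun U => d U * wS (⟨U, rfl⟩ : SS n U.card) J)]
  refine Finset.sum_congr rfl fun S _ => ?_
  congr 1
  have hcast : ∀ (U : Finset (Fin n)) (h : U.card = k),
      wS (⟨U, rfl⟩ : SS n U.card) J = wS (⟨U, h⟩ : SS n k) J := by
    intro U h
    subst h
    rfl
  rw [hcast S.1 S.2]
  exact wS_pos S hJ T₀ hT₀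

end Stmt5Aux

open Stmt5Aux


/-- `(𝒱^S)_{(n−ℓ,ℓ)}` is a free `ℂ[z₁,…,z_n]^{S_n}`-module of rank `C(n,ℓ)`
(there is a family of `C(n,ℓ)` elements such that every element is a unique combination with
symmetric-polynomial coefficients), and consequently `𝒱^S` is free of rank `2^n`. -/
theorem stmt5 (n : ℕ) (hn : 1 ≤ n) (ℓ : ℕ) (hℓ : ℓ ≤ n) :
    (∃ w : Fin (n.choose ℓ) → Vsp n,
      (∀ a, stdInv n (w a) ∧ memWt n ℓ (w a)) ∧
      (∀ f : Vsp n, stdInv n f → memWt n ℓ f →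
        ∃ c : Fin (n.choose ℓ) → MvP n, (∀ a, (c a).IsSymmetric) ∧ f = ∑ a, c a • w a) ∧
      (∀ c : Fin (n.choose ℓ) → MvP n, (∀ a, (c a).IsSymmetric) →
        ∑ a, c a • w a = 0 → ∀ a, c a = 0)) ∧
    (∃ w : Fin (2 ^ n) → Vsp n,
      (∀ a, stdInv n (w a)) ∧
      (∀ f : Vsp n, stdInv n f →
        ∃ c : Fin (2 ^ n) → MvP n, (∀ a, (c a).IsSymmetric) ∧ f = ∑ a, c a • w a) ∧
      (∀ c : Fin (2 ^ n) → MvP n, (∀ a, (c a).IsSymmetric) →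
        ∑ a, c a • w a = 0 → ∀ a, c a = 0)) := by
  constructor
  · -- Part 1 : weight-ℓ component, rank C(n,ℓ)
    refine ⟨fun a => wS (eqvFin n ℓ a), fun a => ⟨wS_stdInv _, wS_memWt _⟩, ?_, ?_⟩
    · -- spanning
      intro f hf hwt
      obtain ⟨c, hsym, hcdel⟩ := exists_c hℓ f hf
      refine ⟨fun a => c (eqvFin n ℓ a), fun a => hsym _, ?_⟩
      funext J
      have h1 : (∑ a, c (eqvFin n ℓ a) • wS (eqvFin n ℓ a)) J
          = ∑ a, c (eqvFin n ℓ a) * wS (eqvFin n ℓ a) J := by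
        rw [Finset.sum_apply]
        exact Finset.sum_congr rfl fun a _ => rfl
      rw [h1, Equiv.sum_comp (eqvFin n ℓ) (fun S => c S * wS S J)]
      by_cases hcnt : cnt J = ℓ
      · have hTc : (supp J).card = ℓ := by rw [← cnt_eq]; exact hcnt
        have h2 : ∀ S : SS n ℓ, wS S J = mS S ⟨supp J, hTc⟩ := fun S => wS_pos S hcnt _ rfl
        rw [Finset.sum_congr rfl (fun S _ => by rw [h2 S]),
          span_core hℓ f hcdel ⟨supp J, hTc⟩,
          show ind ((⟨supp J, hTc⟩ : SS n ℓ)).1 = J from ind_supp J]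
      · rw [hwt J hcnt]
        exact (Finset.sum_eq_zero fun S _ => by rw [wS_zero S hcnt, mul_zero]).symm
    · -- independence
      intro c hsym hzero a₀
      have key : ∀ S : SS n ℓ, c ((eqvFin n ℓ).symm S) = 0 := by
        refine indep_core hℓ (fun T => ?_)
        have h0 : (∑ a, c a • wS (eqvFin n ℓ a)) (ind T.1) = 0 := by rw [hzero]; rfl
        rw [Finset.sum_apply] at h0
        calc ∑ S : SS n ℓ, c ((eqvFin n ℓ).symm S) * mS S T
            = ∑ a, c ((eqvFin n ℓ).symm (eqvFin n ℓ a)) * mS (eqvFin n ℓ a) T :=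
              (Equiv.sum_comp (eqvFin n ℓ) fun S => c ((eqvFin n ℓ).symm S) * mS S T).symm
          _ = ∑ a, (c a • wS (eqvFin n ℓ a)) (ind T.1) := by
              refine Finset.sum_congr rfl fun a _ => ?_
              rw [Equiv.symm_apply_apply,
                show (c a • wS (eqvFin n ℓ a)) (ind T.1)
                  = c a * wS (eqvFin n ℓ a) (ind T.1) from rfl,
                wS_pos _ (by rw [cnt_ind, T.2]) T (supp_ind T.1).symm]
          _ = 0 := h0
      have h := key (eqvFin n ℓ a₀)
      rwa [Equiv.symm_apply_apply] at h
  · -- Part 2 : all of 𝒱^S, rank 2^n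
    refine ⟨fun a => wS (⟨eqvFin2 n a, rfl⟩ : SS n (eqvFin2 n a).card),
      fun a => wS_stdInv _, ?_, ?_⟩
    · -- spanning
      intro f hf
      have hfwt_inv : ∀ k : ℕ, stdInv n (fun J => if cnt J = k then f J else 0) := by
        intro k i j hji J
        by_cases h : cnt J = k
        · simp only [if_pos h, if_pos (show cnt (J ∘ ⇑(Equiv.swap i j)) = k from by
            rw [cnt_comp]; exact h)]
          exact hf i j hji J
        · simp only [if_neg h, if_neg (show ¬ cnt (J ∘ ⇑(Equiv.swap i j)) = k from by
            rw [cnt_comp]; exact h), map_zero, mul_zero]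
      let cc : ∀ k : ℕ, k ≤ n → SS n k → MvP n := fun k hk =>
        (exists_c hk (fun J => if cnt J = k then f J else 0) (hfwt_inv k)).choose
      have hccsym : ∀ k hk S, (cc k hk S).IsSymmetric := fun k hk S =>
        (exists_c hk (fun J => if cnt J = k then f J else 0) (hfwt_inv k)).choose_spec.1 S
      have hccdel : ∀ k hk S, cc k hk S * Del n
          = ((sg hk S : ℤ) : MvP n) * hpol hk (fun J => if cnt J = k then f J else 0) S :=
        fun k hk S =>
          (exists_c hk (fun J => if cnt J = k then f J else 0) (hfwt_inv k)).choose_spec.2 S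
      let d : Finset (Fin n) → MvP n := fun U => cc U.card (card_le_n U) ⟨U, rfl⟩
      refine ⟨fun a => d (eqvFin2 n a), fun a => hccsym _ _ _, ?_⟩
      funext J
      have hTc : (supp J).card = cnt J := (cnt_eq J).symm
      have h1 : (∑ a, d (eqvFin2 n a) • wS (⟨eqvFin2 n a, rfl⟩ : SS n (eqvFin2 n a).card)) J
          = ∑ a, d (eqvFin2 n a) * wS (⟨eqvFin2 n a, rfl⟩ : SS n (eqvFin2 n a).card) J := by
        rw [Finset.sum_apply]
        exact Finset.sum_congr rfl fun a _ => rfl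
      rw [h1, Equiv.sum_comp (eqvFin2 n)
        (fun U => d U * wS (⟨U, rfl⟩ : SS n U.card) J),
        sum_W_eval d J rfl ⟨supp J, hTc⟩ rfl]
      have hd : ∀ S : SS n (cnt J), d S.1 = cc (cnt J) (cnt_le J) S := by
        intro S
        have hgen : ∀ (k : ℕ) (hk : k ≤ n) (U : Finset (Fin n)) (h : U.card = k),
            cc U.card (card_le_n U) ⟨U, rfl⟩ = cc k hk ⟨U, h⟩ := by
          intro k hk U h
          subst h
          rfl
        exact hgen (cnt J) (cnt_le J) S.1 S.2
      rw [Finset.sum_congr rfl (fun S _ => by rw [hd S]),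
        span_core (cnt_le J) (fun J' => if cnt J' = cnt J then f J' else 0)
          (hccdel (cnt J) (cnt_le J)) ⟨supp J, hTc⟩,
        show ind ((⟨supp J, hTc⟩ : SS n (cnt J))).1 = J from ind_supp J, if_pos rfl]
    · -- independence
      intro c hsym hzero a₀
      have key : ∀ S : SS n (eqvFin2 n a₀).card, c ((eqvFin2 n).symm S.1) = 0 := by
        refine indep_core (card_le_n (eqvFin2 n a₀)) (fun T => ?_)
        have h0 : (∑ a, c a • wS (⟨eqvFin2 n a, rfl⟩ : SS n (eqvFin2 n a).card)) (ind T.1)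
            = 0 := by rw [hzero]; rfl
        rw [Finset.sum_apply] at h0
        calc ∑ S : SS n (eqvFin2 n a₀).card, c ((eqvFin2 n).symm S.1) * mS S T
            = ∑ U : Finset (Fin n),
                c ((eqvFin2 n).symm U) * wS (⟨U, rfl⟩ : SS n U.card) (ind T.1) :=
              (sum_W_eval (fun U => c ((eqvFin2 n).symm U)) (ind T.1)
                (by rw [cnt_ind, T.2]) T (supp_ind T.1).symm).symm
          _ = ∑ a, c ((eqvFin2 n).symm (eqvFin2 n a))
                * wS (⟨eqvFin2 n a, rfl⟩ : SS n (eqvFin2 n a).card) (ind T.1) :=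
              (Equiv.sum_comp (eqvFin2 n) fun U =>
                c ((eqvFin2 n).symm U) * wS (⟨U, rfl⟩ : SS n U.card) (ind T.1)).symm
          _ = 0 := by
              rw [← h0]
              refine Finset.sum_congr rfl fun a _ => ?_
              rw [Equiv.symm_apply_apply]
              rfl
      have h := key ⟨eqvFin2 n a₀, rfl⟩
      rwa [Equiv.symm_apply_apply] at h


end
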